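/- Let P be a finite poset without isolated points, R a retract of P, and suppose R has height one. Then there exists a retract Q of P with Q order-isomorphic to R and Q contained in the set E(P) of extremal points of P. -/

import Mathlib

open Set

/-- Minimal points of a poset. -/
def LSet (α : Type*) [PartialOrder α] : Set α := {x | ∀ y, y ≤ x → y = x}

/-- Maximal points of a poset. -/
def USet (α : Type*) [PartialOrder α] : Set α := {x | ∀ y, x ≤ y → y = x}

/-- Extremal points. -/
def ESet (α : Type*) [PartialOrder α] : Set α := LSet α ∪ USet α

/-- Non-extremal (interior) points. -/
def MSet (α : Type*) [PartialOrder α] : Set α := (ESet α)ᶜ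

/-- No isolated points: every point is comparable to some other point. -/
def NoIsolated (α : Type*) [PartialOrder α] : Prop := ∀ x : α, ∃ y : α, x < y ∨ y < x

/-- Height one: every point is extremal and some strict comparability exists. -/
def HeightOne (α : Type*) [PartialOrder α] : Prop :=
  (∀ x : α, x ∈ ESet α) ∧ ∃ x y : α, x < y

/-- A 4-crown with minimal points a, b and maximal points v, w:
the comparabilities are exactly a<v, a<w, b<v, b<w. -/
def IsCrown {α : Type*} [PartialOrder α] (a b v w : α) : Prop :=
  a < v ∧ a < w ∧ b < v ∧ b < w ∧ ¬ a ≤ b ∧ ¬ b ≤ a ∧ ¬ v ≤ w ∧ ¬ w ≤ v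

/-- The inner of a 4-crown: [a,v] ∩ [b,w]. -/
def crownInner {α : Type*} [PartialOrder α] (a b v w : α) : Set α :=
  {m | a ≤ m ∧ m ≤ v} ∩ {m | b ≤ m ∧ m ≤ w}

/-- An improper 4-crown contained in the extremal points E(P). -/
def IsImproperCrownE {α : Type*} [PartialOrder α] (a b v w : α) : Prop :=
  IsCrown a b v w ∧ a ∈ ESet α ∧ b ∈ ESet α ∧ v ∈ ESet α ∧ w ∈ ESet α ∧
    (crownInner a b v w).Nonempty

/-- Inner points of improper 4-crowns contained in E(P). -/
def innerPts (α : Type*) [PartialOrder α] : Set α :=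
  {m | ∃ a b v w : α, IsImproperCrownE a b v w ∧ m ∈ crownInner a b v w}

/-- Ξ(m): union of all improper 4-crowns with inner point m. -/
def Xi {α : Type*} [PartialOrder α] (m : α) : Set α :=
  (LSet α ∩ {x | x ≤ m}) ∪ (USet α ∩ {x | m ≤ x})

/-- 4-crown bundles: maximal sets Ξ(m) with respect to inclusion. -/
def bundles (α : Type*) [PartialOrder α] : Set (Set α) :=
  {F | ∃ m ∈ innerPts α, F = Xi m ∧
    ∀ m' ∈ innerPts α, Xi m ⊆ Xi m' → Xi m' = Xi m}

/-- R is a retract of the poset on α. -/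
def IsRetract (α : Type*) [PartialOrder α] (R : Set α) : Prop :=
  ∃ r : α → α, Monotone r ∧ (∀ x, r (r x) = r x) ∧ Set.range r = R

/-- C is a retract of the induced subposet on Y. -/
def IsRetractIn {α : Type*} [PartialOrder α] (Y C : Set α) : Prop :=
  ∃ r : Y → Y, Monotone r ∧ (∀ x, r (r x) = r x) ∧
    Set.range r = {y : Y | (y : α) ∈ C}

/-- The comparability graph of the poset is connected. -/
def PosetConnected (α : Type*) [PartialOrder α] : Prop :=
  ∀ x y : α, Relation.ReflTransGen (fun u v => u ≤ v ∨ v ≤ u) x y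

/-- Minimal points of an induced subposet. -/
def minIn {α : Type*} [PartialOrder α] (S : Set α) : Set α :=
  {x ∈ S | ∀ y ∈ S, y ≤ x → y = x}

/-- Maximal points of an induced subposet. -/
def maxIn {α : Type*} [PartialOrder α] (S : Set α) : Set α :=
  {x ∈ S | ∀ y ∈ S, x ≤ y → y = x}

theorem stmt11 {α : Type*} [Fintype α] [PartialOrder α]
    (hiso : NoIsolated α) (R : Set α) (hR : IsRetract α R)
    (hht : (∀ x ∈ R, x ∈ minIn R ∪ maxIn R) ∧ ∃ x ∈ R, ∃ y ∈ R, x < y) :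
    ∃ Q : Set α, Q ⊆ ESet α ∧ IsRetract α Q ∧ Nonempty (↥Q ≃o ↥R) := by
  classical
  obtain ⟨r, hmono, hidem, hrange⟩ := hR
  have hrR : ∀ z, r z ∈ R := fun z => hrange ▸ ⟨z, rfl⟩
  have hfix : ∀ x ∈ R, r x = x := by
    intro x hx
    rw [← hrange] at hx
    obtain ⟨z, rfl⟩ := hx
    exact hidem z
  -- choose extremal points
  have hminex : ∀ x : α, ∃ l, (∀ y, y ≤ l → y = l) ∧ l ≤ x := by
    intro x
    obtain ⟨l, hl1, hl2⟩ := Finite.exists_le_minimal (p := fun _ : α => True) (a := x) trivial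
    exact ⟨l, fun y hy => le_antisymm hy (hl2.2 trivial hy), hl1⟩
  have hmaxex : ∀ x : α, ∃ u, (∀ y, u ≤ y → y = u) ∧ x ≤ u := by
    intro x
    obtain ⟨u, hu1, hu2⟩ := Finite.exists_le_maximal (p := fun _ : α => True) (a := x) trivial
    exact ⟨u, fun y hy => le_antisymm (hu2.2 trivial hy) hy, hu1⟩
  choose l hlmin hlle using hminex
  choose u humax hule using hmaxex
  set φ : α → α := fun x => if x ∈ minIn R then l x else u x with hφ
  -- r ∘ φ = id on R
  have hrφ : ∀ x ∈ R, r (φ x) = x := by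
    intro x hx
    by_cases hm : x ∈ minIn R
    · have h1 : r (l x) ≤ x := by
        calc r (l x) ≤ r x := hmono (hlle x)
        _ = x := hfix x hx
      have := hm.2 (r (l x)) (hrR _) h1
      simpa [hφ, hm] using this
    · have hMx : x ∈ maxIn R := (hht.1 x hx).resolve_left hm
      have h1 : x ≤ r (u x) := by
        calc x = r x := (hfix x hx).symm
        _ ≤ r (u x) := hmono (hule x)
      have := hMx.2 (r (u x)) (hrR _) h1
      simpa [hφ, hm] using this
  -- φ is monotone on R
  have hφmono : ∀ x ∈ R, ∀ y ∈ R, x ≤ y → φ x ≤ φ y := by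
    intro x hx y hy hxy
    rcases eq_or_ne x y with rfl | hne
    · exact le_refl (φ x)
    by_cases hm : x ∈ minIn R
    · by_cases hm' : y ∈ minIn R
      · exact absurd (hm'.2 x hx hxy) hne
      · simp only [hφ, if_pos hm, if_neg hm']
        calc l x ≤ x := hlle x
        _ ≤ y := hxy
        _ ≤ u y := hule y
    · have hMx : x ∈ maxIn R := (hht.1 x hx).resolve_left hm
      exact absurd (hMx.2 y hy hxy).symm hne
  -- φ lands in extremal points
  have hφE : ∀ x, φ x ∈ ESet α := by
    intro x
    by_cases hm : x ∈ minIn R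
    · exact Or.inl (by simpa [hφ, hm, LSet] using hlmin x)
    · exact Or.inr (by simpa [hφ, hm, USet] using humax x)
  refine ⟨φ '' R, ?_, ?_, ?_⟩
  · rintro q ⟨x, _, rfl⟩; exact hφE x
  · refine ⟨φ ∘ r, ?_, ?_, ?_⟩
    · intro a b hab
      exact hφmono _ (hrR a) _ (hrR b) (hmono hab)
    · intro z
      simp only [Function.comp]
      rw [hrφ _ (hrR z)]
    · ext q
      constructor
      · rintro ⟨z, rfl⟩; exact ⟨r z, hrR z, rfl⟩
      · rintro ⟨x, hx, rfl⟩
        exact ⟨x, by simp only [Function.comp]; rw [hfix x hx]⟩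
  · -- order isomorphism
    refine ⟨{
      toFun := fun q => ⟨r q, hrR q⟩
      invFun := fun x => ⟨φ x, ⟨x, x.2, rfl⟩⟩
      left_inv := ?_
      right_inv := ?_
      map_rel_iff' := ?_ }⟩
    · rintro ⟨q, x, hx, rfl⟩
      simp only [Subtype.mk.injEq]
      apply Subtype.ext; show φ (r (φ x)) = φ x; rw [hrφ x hx]
    · rintro ⟨x, hx⟩
      simp only [Subtype.mk.injEq]
      exact hrφ x hx
    · rintro ⟨q, x, hx, rfl⟩ ⟨q', x', hx', rfl⟩
      simp only [Equiv.coe_fn_mk, Subtype.mk_le_mk]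
      rw [hrφ x hx, hrφ x' hx']
      constructor
      · intro h; exact hφmono x hx x' hx' h
      · intro h
        have := hmono h
        rwa [hrφ x hx, hrφ x' hx'] at this
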